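/- Let G be a degenerate edge-colored complete graph K_n (n ≥ 4) containing no monochromatic triangle, and suppose no proper subset S ⊊ V(G) is a degenerate set of G. Then every vertex of G is contained in properly colored cycles of every length from 4 to n. -/

import Mathlib

/-- An edge-colored graph (with total symmetric coloring `col`) contains a
monochromatic triangle. -/
def HasMonoTriangle {V : Type*} (col : V → V → ℕ) : Prop :=
  ∃ x y z : V, x ≠ y ∧ y ≠ z ∧ x ≠ z ∧ col x y = col y z ∧ col x y = col x z

/-- `c : ZMod ℓ → V` is a properly colored cycle of length `ℓ` in the
edge-colored complete graph with coloring `col`. -/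
def IsPCCycle {V : Type*} {ℓ : ℕ} (col : V → V → ℕ) (c : ZMod ℓ → V) : Prop :=
  Function.Injective c ∧
    ∀ i : ZMod ℓ, col (c i) (c (i + 1)) ≠ col (c (i + 1)) (c (i + 2))

/-- There is a properly colored cycle of length `ℓ` through `v`. -/
def PCThrough {V : Type*} (col : V → V → ℕ) (ℓ : ℕ) (v : V) : Prop :=
  ∃ c : ZMod ℓ → V, IsPCCycle col c ∧ ∃ i, c i = v

/-- `S` is a degenerate set of the edge-colored complete graph `col`. -/
def DegenSet {V : Type*} (col : V → V → ℕ) (S : Set V) : Prop :=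
  S.Nonempty ∧ ∃ f : V → ℕ,
    (∀ u ∈ S, ∀ v ∈ S, u ≠ v → col u v = f u ∨ col u v = f v) ∧
    (∀ u ∈ S, ∀ v, v ∉ S → col u v = f u)

namespace DVP
open List

variable {V : Type*}

theorem mem_getLast?' (l : List V) (h : l ≠ []) : l.getLast h ∈ l.getLast? :=
  getLast?_eq_getLast h

theorem chain'_glue {A : V → V → Prop} {l₁ : List V} {b : V} {l₂ : List V}
    (hne : l₁ ≠ [])
    (h1 : Chain' A l₁) (h2 : Chain' A (b :: l₂))
    (hlink : A (l₁.getLast hne) b) : Chain' A (l₁ ++ b :: l₂) := by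
  refine isChain_append.mpr ⟨h1, h2, ?_⟩
  intro x hx y hy
  rw [getLast?_eq_getLast hne] at hx
  simp only [head?_cons, Option.mem_def, Option.some.injEq] at hx hy
  subst hx; subst hy; exact hlink

theorem chain'_split {A : V → V → Prop} {l₁ : List V} {b : V} {l₂ : List V}
    (h : Chain' A (l₁ ++ b :: l₂)) :
    Chain' A l₁ ∧ Chain' A (b :: l₂) ∧ ∀ hne : l₁ ≠ [], A (l₁.getLast hne) b := by
  obtain ⟨h1, h2, h3⟩ := isChain_append.mp h
  exact ⟨h1, h2, fun hne => h3 _ (mem_getLast?' l₁ hne) b rfl⟩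

/-- Cycle with head `a` and tail `L`: closed chain. -/
def IsCyc (A : V → V → Prop) (a : V) (L : List V) : Prop :=
  (a :: L).Nodup ∧ List.Chain' A ((a :: L) ++ [a])

theorem IsCyc.nodup {A : V → V → Prop} {a : V} {L : List V} (h : IsCyc A a L) :
    (a :: L).Nodup := h.1

theorem IsCyc.chain {A : V → V → Prop} {a : V} {L : List V} (h : IsCyc A a L) :
    Chain' A (a :: L) := h.2.prefix (prefix_append _ _)

theorem IsCyc.closure {A : V → V → Prop} {a : V} {L : List V} (h : IsCyc A a L) :
    A ((a :: L).getLast (cons_ne_nil a L)) a :=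
  (chain'_split h.2).2.2 (cons_ne_nil a L)

theorem isCyc_of_parts {A : V → V → Prop} {a : V} {L : List V}
    (hnd : (a :: L).Nodup) (hc : Chain' A (a :: L))
    (hcl : A ((a :: L).getLast (cons_ne_nil a L)) a) : IsCyc A a L :=
  ⟨hnd, chain'_glue (cons_ne_nil a L) hc (isChain_singleton a) hcl⟩

theorem IsCyc.rotate {A : V → V → Prop} {a b : V} {L X Y : List V}
    (h : IsCyc A a L) (heq : a :: L = X ++ b :: Y) : IsCyc A b (Y ++ X) := by
  have hperm : (a :: L) ~ (b :: (Y ++ X)) := by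
    rw [heq]
    calc X ++ (b :: Y) ~ (b :: Y) ++ X := perm_append_comm
    _ = b :: (Y ++ X) := by simp
  have hnd : (b :: (Y ++ X)).Nodup := hperm.nodup h.1
  rcases X with _ | ⟨x, X'⟩
  · simp only [nil_append] at heq
    injection heq with e1 e2
    subst e1; subst e2
    simpa using h
  · have hx : x = a := by
      have := congrArg List.head? heq; simpa using this.symm
    subst hx
    -- now the original head is named x
    have hcc : Chain' A ((x :: X') ++ b :: (Y ++ [x])) := by
      have := h.2; rw [heq] at this; simpa using this
    obtain ⟨h1, h2, h3⟩ := chain'_split hcc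
    have hlink : A ((x :: X').getLast (cons_ne_nil _ _)) b := h3 _
    have h2' : Chain' A ((b :: Y) ++ x :: []) := by simpa using h2
    obtain ⟨h2a, _, h2c⟩ := chain'_split h2'
    have hcl2 : A ((b :: Y).getLast (cons_ne_nil _ _)) x := h2c _
    refine ⟨hnd, ?_⟩
    show Chain' A ((b :: (Y ++ x :: X')) ++ [b])
    have e : (b :: (Y ++ x :: X')) ++ [b] = (b :: Y) ++ (x :: (X' ++ b :: [])) := by simp
    rw [e]
    refine chain'_glue (cons_ne_nil _ _) h2a ?_ hcl2
    show Chain' A ((x :: X') ++ b :: [])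
    exact chain'_glue (cons_ne_nil _ _) h1 (isChain_singleton b) hlink

theorem cyc_perm_of_split {a b : V} {L X Y : List V}
    (heq : a :: L = X ++ b :: Y) : (a :: L) ~ (b :: (Y ++ X)) := by
  rw [heq]
  calc X ++ (b :: Y) ~ (b :: Y) ++ X := perm_append_comm
  _ = b :: (Y ++ X) := by simp

/-- Normalize a cycle to start at a given member. -/
theorem IsCyc.to_head {A : V → V → Prop} {a v : V} {L : List V}
    (h : IsCyc A a L) (hv : v ∈ a :: L) :
    ∃ M, IsCyc A v M ∧ (a :: L) ~ (v :: M) := by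
  obtain ⟨X, Y, heq⟩ := List.append_of_mem hv
  exact ⟨Y ++ X, h.rotate heq, cyc_perm_of_split heq⟩

/-- Every member of a cycle (of length ≥ 2) has a successor along the cycle. -/
theorem IsCyc.succ {A : V → V → Prop} {a x : V} {L : List V}
    (h : IsCyc A a L) (hx : x ∈ a :: L) (hL : L ≠ []) :
    ∃ s ∈ a :: L, A x s := by
  obtain ⟨M, hM, hperm⟩ := h.to_head hx
  have hMne : M ≠ [] := by
    intro he
    have := hperm.length_eq
    simp [he] at this
    exact hL (by simpa using this)
  obtain ⟨m, M', rfl⟩ := M.exists_cons_of_ne_nil hMne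
  have hxm : A x m := (isChain_cons_cons.mp hM.chain).1
  have : m ∈ a :: L := hperm.mem_iff.mpr (by simp)
  exact ⟨m, this, hxm⟩

/-- Insert a fresh vertex at the seam of a cycle. -/
theorem IsCyc.insert_seam {A : V → V → Prop} {q u : V} {M : List V}
    (h : IsCyc A q M) (hu : u ∉ q :: M)
    (h1 : A ((q :: M).getLast (cons_ne_nil _ _)) u) (h2 : A u q) :
    IsCyc A q (M ++ [u]) := by
  constructor
  · have e : q :: (M ++ [u]) = (q :: M) ++ [u] := by simp
    rw [e, nodup_append']
    exact ⟨h.nodup, nodup_singleton u, by simpa using hu⟩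
  · have e : (q :: (M ++ [u])) ++ [q] = (q :: M) ++ u :: [q] := by simp
    rw [e]
    exact chain'_glue (cons_ne_nil _ _) h.chain (isChain_pair.mpr h2) h1

section Abstract

variable {A : V → V → Prop} {f : V → ℕ}

/-- There is a nodup path between any two vertices. -/
theorem exists_path
    (hStrong : ∀ S : Set V, S.Nonempty → S ≠ Set.univ → ∃ u ∈ S, ∃ x, x ∉ S ∧ A x u)
    (v w : V) :
    ∃ P : List V, P.head? = some v ∧ P.getLast? = some w ∧ P.Nodup ∧ Chain' A P := by
  set S : Set V :=
    {w | ∃ P : List V, P.head? = some v ∧ P.getLast? = some w ∧ P.Nodup ∧ Chain' A P} with hS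
  have hv : v ∈ S := ⟨[v], rfl, rfl, nodup_singleton v, isChain_singleton v⟩
  suffices hsu : S = Set.univ by
    have : w ∈ S := hsu ▸ Set.mem_univ w
    exact this
  by_contra hne
  obtain ⟨u, huS, x, hxS, hxu⟩ := hStrong Sᶜ
    (by
      obtain ⟨t, ht⟩ := Set.ne_univ_iff_exists_notMem S |>.mp hne
      exact ⟨t, ht⟩)
    (by
      intro hceq
      have : v ∈ Sᶜ := hceq ▸ Set.mem_univ v
      exact this hv)
  have hxmem : x ∈ S := by simpa using hxS
  obtain ⟨P, hPh, hPl, hPn, hPc⟩ := hxmem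
  have hPne : P ≠ [] := by intro he; rw [he] at hPh; simp at hPh
  by_cases hu : u ∈ P
  · -- take the prefix up to u : contradiction with u ∉ S
    obtain ⟨X, Y, rfl⟩ := List.append_of_mem hu
    have : u ∈ S := by
      refine ⟨X ++ [u], ?_, by simp, ?_, ?_⟩
      · rw [← hPh]
        rcases X with _ | ⟨x0, X'⟩ <;> simp
      · have hsub : (X ++ [u]).Sublist (X ++ u :: Y) := by
          apply Sublist.append_left
          simpa using (sublist_cons_self u Y).cons₂ u
        exact hPn.sublist hsub
      · exact hPc.prefix ⟨Y, by simp⟩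
    exact huS this
  · -- append u : contradiction with u ∉ S
    have hlast : P.getLast hPne = x := by
      rw [getLast?_eq_getLast hPne] at hPl
      exact Option.some.inj hPl
    have : u ∈ S := by
      refine ⟨P ++ [u], ?_, by simp, ?_, ?_⟩
      · rw [← hPh]
        rcases P with _ | ⟨p0, P'⟩
        · exact absurd rfl hPne
        · simp
      · rw [nodup_append']
        exact ⟨hPn, nodup_singleton u, by simpa using hu⟩
      · exact chain'_glue hPne hPc (isChain_singleton u) (hlast ▸ hxu)
    exact huS this

variable [Fintype V]

/-- There is some cycle (length ≥ 3) through every vertex. -/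
theorem exists_cycle_through
    (hA_ne : ∀ {u v : V}, A u v → f u ≠ f v)
    (hAsym : ∀ {u v : V}, A u v → ¬ A v u)
    (hStrong : ∀ S : Set V, S.Nonempty → S ≠ Set.univ → ∃ u ∈ S, ∃ x, x ∉ S ∧ A x u)
    (hcard : 2 ≤ Fintype.card V) (v : V) :
    ∃ L, IsCyc A v L ∧ 3 ≤ (v :: L).length := by
  obtain ⟨u, hu⟩ := Fintype.exists_ne_of_one_lt_card (by omega) v
  obtain ⟨x, hx, y, hy, hyx⟩ := hStrong {v} ⟨v, rfl⟩
    (by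
      intro he
      exact hu (by have : u ∈ ({v} : Set V) := he ▸ Set.mem_univ u; simpa using this))
  have hxv : x = v := hx
  subst hxv
  have hyv : y ≠ x := by simpa using hy
  -- nodup path from x to y, then close with the arc y → x
  obtain ⟨P, hPh, hPl, hPn, hPc⟩ := exists_path hStrong x y
  have hPne : P ≠ [] := by intro he; rw [he] at hPh; simp at hPh
  obtain ⟨p0, Pt, rfl⟩ := P.exists_cons_of_ne_nil hPne
  have hp0 : p0 = x := by simpa using hPh
  subst hp0
  have hlast : (p0 :: Pt).getLast (cons_ne_nil _ _) = y := by
    rw [getLast?_eq_getLast (cons_ne_nil p0 Pt)] at hPl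
    exact Option.some.inj hPl
  refine ⟨Pt, ⟨hPn, ?_⟩, ?_⟩
  · exact chain'_glue (cons_ne_nil _ _) hPc (isChain_singleton p0) (hlast ▸ hyx)
  · -- length ≥ 3
    rcases Pt with _ | ⟨q1, Qt⟩
    · exact absurd (by simpa using hlast) hyv.symm
    rcases Qt with _ | ⟨q2, Qt'⟩
    · -- P = [p0, q1] : A p0 q1 and A q1 p0 contradict asymmetry
      have h1 : A p0 q1 := (isChain_cons_cons.mp hPc).1
      have h2 : A q1 p0 := by
        have : q1 = y := by simpa using hlast
        exact this ▸ hyx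
      exact absurd h2 (hAsym h1)
    · simp

/-- Shortcut a cycle by jumping from the head to a later vertex. -/
theorem cyc_shortcut_out {v s : V} {X T : List V}
    (h : IsCyc A v (X ++ s :: T)) (harc : A v s) : IsCyc A v (s :: T) := by
  refine isCyc_of_parts ?_ ?_ ?_
  · refine h.nodup.sublist ?_
    exact (sublist_append_right X (s :: T)).cons₂ v
  · exact isChain_cons_cons.mpr ⟨harc, h.chain.suffix ⟨v :: X, by simp⟩⟩
  · have e1 : (v :: (X ++ s :: T)).getLast (cons_ne_nil _ _)
        = (s :: T).getLast (cons_ne_nil _ _) := by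
      rw [List.getLast_cons (by simp)]
      exact List.getLast_append_of_ne_nil _ _
    have e2 : (v :: s :: T).getLast (cons_ne_nil _ _)
        = (s :: T).getLast (cons_ne_nil _ _) := List.getLast_cons (by simp)
    rw [e2, ← e1]
    exact h.closure

/-- Shortcut a cycle by jumping from a vertex back to the head. -/
theorem cyc_shortcut_in {v s : V} {X T : List V}
    (h : IsCyc A v (X ++ s :: T)) (harc : A s v) : IsCyc A v (X ++ [s]) := by
  refine isCyc_of_parts ?_ ?_ ?_
  · refine h.nodup.sublist ?_
    have : (X ++ [s]).Sublist (X ++ s :: T) :=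
      Sublist.append_left ((nil_sublist T).cons₂ s) X
    exact this.cons₂ v
  · refine h.chain.prefix ?_
    exact ⟨T, by simp⟩
  · have e : (v :: (X ++ [s])).getLast (cons_ne_nil _ _) = s := by
      rw [List.getLast_cons (by simp)]
      rw [List.getLast_append_of_ne_nil _ (by simp : [s] ≠ [])]
      rfl
    rw [e]; exact harc

/-- A cycle of length ≥ 5 through `v` can be shortened, staying ≥ 3. -/
theorem cyc_shorten
    (hA_ne : ∀ {u v : V}, A u v → f u ≠ f v)
    (hTot : ∀ {u v : V}, u ≠ v → f u ≠ f v → A u v ∨ A v u)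
    (hMatch : ∀ {u v w : V}, u ≠ v → u ≠ w → v ≠ w → f u = f v → f u = f w → False)
    {v b c d : V} {L' : List V} (hL' : L' ≠ [])
    (h : IsCyc A v (b :: c :: d :: L')) :
    ∃ L2, IsCyc A v L2 ∧ 3 ≤ (v :: L2).length ∧
      (v :: L2).length < (v :: b :: c :: d :: L').length := by
  have hnd := h.nodup
  have hvc : v ≠ c := by intro he; subst he; simp at hnd
  have hvd : v ≠ d := by intro he; subst he; simp at hnd
  have hcd : c ≠ d := by intro he; subst he; simp at hnd
  have hL'len : 1 ≤ L'.length := by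
    rcases L' with _ | _
    · exact absurd rfl hL'
    · simp
  have hne : f v ≠ f c ∨ f v ≠ f d := by
    by_contra hcon
    push_neg at hcon
    exact hMatch hvc hvd hcd (not_not.mp (by simpa using hcon.1)) (not_not.mp (by simpa using hcon.2))
  rcases hne with hfc | hfd
  · rcases hTot hvc hfc with harc | harc
    · exact ⟨c :: d :: L', cyc_shortcut_out (X := [b]) (by simpa using h) harc,
        by simp, by simp⟩
    · exact ⟨[b, c], cyc_shortcut_in (X := [b]) (T := d :: L') (by simpa using h) harc,
        by simp, by simp only [List.length_cons, List.length_nil]; omega⟩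
  · rcases hTot hvd hfd with harc | harc
    · exact ⟨d :: L', cyc_shortcut_out (X := [b, c]) (by simpa using h) harc,
        by simp only [List.length_cons, List.length_nil]; omega, by simp⟩
    · exact ⟨[b, c, d], cyc_shortcut_in (X := [b, c]) (T := L') (by simpa using h) harc,
        by simp, by simp only [List.length_cons, List.length_nil]; omega⟩

/-- Every vertex lies on a cycle of length 3 or 4. -/
theorem exists_short_cycle
    (hA_ne : ∀ {u v : V}, A u v → f u ≠ f v)
    (hAsym : ∀ {u v : V}, A u v → ¬ A v u)
    (hTot : ∀ {u v : V}, u ≠ v → f u ≠ f v → A u v ∨ A v u)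
    (hMatch : ∀ {u v w : V}, u ≠ v → u ≠ w → v ≠ w → f u = f v → f u = f w → False)
    (hStrong : ∀ S : Set V, S.Nonempty → S ≠ Set.univ → ∃ u ∈ S, ∃ x, x ∉ S ∧ A x u)
    (hcard : 2 ≤ Fintype.card V) (v : V) :
    ∃ L, IsCyc A v L ∧ ((v :: L).length = 3 ∨ (v :: L).length = 4) := by
  obtain ⟨L0, hc0, hl0⟩ := exists_cycle_through (f := f) hA_ne hAsym hStrong hcard v
  suffices key : ∀ m (L : List V), IsCyc A v L → (v :: L).length ≤ m → 3 ≤ (v :: L).length →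
      ∃ L2, IsCyc A v L2 ∧ ((v :: L2).length = 3 ∨ (v :: L2).length = 4) by
    exact key (v :: L0).length L0 hc0 le_rfl hl0
  intro m
  induction m with
  | zero => intro L _ h1 h2; omega
  | succ m ih =>
    intro L hc h1 h2
    by_cases hle : (v :: L).length ≤ 4
    · exact ⟨L, hc, by omega⟩
    · push_neg at hle
      rcases L with _ | ⟨b, L1⟩; · simp at h2
      rcases L1 with _ | ⟨c, L2⟩; · simp at hle
      rcases L2 with _ | ⟨d, L3⟩; · simp at hle
      have hL3 : L3 ≠ [] := by
        intro he; subst he; simp at hle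
      obtain ⟨L4, hc4, h34, hlt⟩ := cyc_shorten (f := f) hA_ne hTot hMatch hL3 hc
      exact ih L4 hc4 (by omega) h34

/-- Walk along a chain propagating the property `A w u ∨ twin u w`,
or find an insertion point for `u`. -/
theorem walk
    (hA_ne : ∀ {u v : V}, A u v → f u ≠ f v)
    (hTot : ∀ {u v : V}, u ≠ v → f u ≠ f v → A u v ∨ A v u)
    (hMatch : ∀ {u v w : V}, u ≠ v → u ≠ w → v ≠ w → f u = f v → f u = f w → False)
    (hT : ∀ {x y z : V}, x ≠ y → f x = f y → A x z → A y z → False)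
    (u : V) :
    ∀ (l : List V) (s : V), Chain' A (s :: l) → (∀ w ∈ s :: l, w ≠ u) →
      (A s u ∨ f u = f s) →
      (∀ w ∈ s :: l, A w u ∨ f u = f w) ∨
        ∃ X Y : List V, ∃ p q : V, s :: l = X ++ p :: q :: Y ∧ A p u ∧ A u q := by
  intro l
  induction l with
  | nil =>
    intro s _ _ hP
    left
    intro w hw
    rw [mem_singleton] at hw
    subst hw
    rcases hP with h | h
    · exact Or.inl h
    · exact Or.inr h
  | cons q0 l' ih =>
    intro s hch hne hP
    have hsq0 : A s q0 := (isChain_cons_cons.mp hch).1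
    have hq0ne : q0 ≠ u := hne q0 (by simp)
    have hsne : s ≠ u := hne s (by simp)
    have hstep : (A q0 u ∨ f u = f q0) ∨ (A s u ∧ A u q0) := by
      rcases hP with hAsu | htw
      · by_cases hq : A u q0
        · exact Or.inr ⟨hAsu, hq⟩
        · left
          by_cases hf : f u = f q0
          · exact Or.inr hf
          · rcases hTot (Ne.symm hq0ne) hf with h | h
            · exact absurd h hq
            · exact Or.inl h
      · have hnq : ¬ A u q0 := fun hq => hT (Ne.symm hsne) htw hq hsq0
        left
        by_cases hf : f u = f q0
        · exact absurd (htw.symm.trans hf) (hA_ne hsq0)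
        · rcases hTot (Ne.symm hq0ne) hf with h | h
          · exact absurd h hnq
          · exact Or.inl h
    rcases hstep with hP0 | hins
    · rcases ih q0 (isChain_cons_cons.mp hch).2 (fun w hw => hne w (mem_cons_of_mem s hw)) hP0 with
        hall | ⟨X, Y, p, q, heq, h1, h2⟩
      · left
        intro w hw
        rcases mem_cons.mp hw with rfl | hw'
        · exact hP
        · exact hall w hw'
      · right
        exact ⟨s :: X, Y, p, q, by rw [cons_append, ← heq], h1, h2⟩
    · exact Or.inr ⟨[], l', s, q0, rfl, hins.1, hins.2⟩


theorem getLast_form {l l' : List V} {x : V} (e : l = l' ++ [x]) (h : l ≠ []) :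
    l.getLast h = x := by
  subst e
  rw [List.getLast_append_of_ne_nil _ (by simp : [x] ≠ [])]
  rfl

/-- Key extension lemma: a cycle of length `3 ≤ k < |V|` through `v` can be
extended to a cycle of length `k+1` through `v`. -/
theorem cyc_extend
    (hA_ne : ∀ {u v : V}, A u v → f u ≠ f v)
    (hAsym : ∀ {u v : V}, A u v → ¬ A v u)
    (hTot : ∀ {u v : V}, u ≠ v → f u ≠ f v → A u v ∨ A v u)
    (hMatch : ∀ {u v w : V}, u ≠ v → u ≠ w → v ≠ w → f u = f v → f u = f w → False)
    (hT : ∀ {x y z : V}, x ≠ y → f x = f y → A x z → A y z → False)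
    (hStrong : ∀ S : Set V, S.Nonempty → S ≠ Set.univ → ∃ u ∈ S, ∃ x, x ∉ S ∧ A x u)
    {a v : V} {L : List V} (h : IsCyc A a L) (hv : v ∈ a :: L)
    (h3 : 3 ≤ (a :: L).length) (hlt : (a :: L).length < Fintype.card V) :
    ∃ b M, IsCyc A b M ∧ v ∈ b :: M ∧ (b :: M).length = (a :: L).length + 1 := by
  classical
  have hStrongOut : ∀ S : Set V, S.Nonempty → S ≠ Set.univ →
      ∃ x ∈ S, ∃ u, u ∉ S ∧ A x u := by
    intro S h1 h2
    obtain ⟨u, huc, x, hxc, hxu⟩ := hStrong Sᶜ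
      (by obtain ⟨t, ht⟩ := (Set.ne_univ_iff_exists_notMem S).mp h2; exact ⟨t, ht⟩)
      (by
        obtain ⟨s, hs⟩ := h1
        intro he
        exact (he ▸ Set.mem_univ s : s ∈ Sᶜ) hs)
    exact ⟨x, Set.notMem_compl_iff.mp hxc, u, huc, hxu⟩
  -- an outside vertex exists
  have hout : ∃ u, u ∉ a :: L := by
    by_contra hall
    push_neg at hall
    have hsub : (Finset.univ : Finset V) ⊆ (a :: L).toFinset := by
      intro t _
      simpa using hall t
    have hcard := Finset.card_le_card hsub
    rw [toFinset_card_of_nodup h.nodup, Finset.card_univ] at hcard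
    omega
  obtain ⟨u0, hu0⟩ := hout
  by_cases hmix : ∃ u, u ∉ a :: L ∧ (∃ x ∈ a :: L, A x u) ∧ (∃ y ∈ a :: L, A u y)
  · -- CASE 1: a mixed vertex can be inserted
    obtain ⟨u, huW, ⟨x, hxW, hxu⟩, ⟨y, hyW, huy⟩⟩ := hmix
    obtain ⟨M, hMc, hperm⟩ := h.to_head hxW
    have hneu : ∀ w ∈ x :: M, w ≠ u := by
      intro w hw he
      exact huW (hperm.mem_iff.mpr (he ▸ hw))
    rcases walk (f := f) hA_ne hTot hMatch hT u M x hMc.chain hneu (Or.inl hxu) with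
      hall | ⟨X, Y, p, q, heq, hpu, huq⟩
    · exfalso
      have hy2 : y ∈ x :: M := hperm.mem_iff.mp hyW
      rcases hall y hy2 with h' | h'
      · exact hAsym huy h'
      · exact hA_ne huy h'
    · have heq2 : x :: M = (X ++ [p]) ++ q :: Y := by rw [heq]; simp
      have hrot : IsCyc A q (Y ++ (X ++ [p])) := hMc.rotate heq2
      have hperm2 : (x :: M) ~ q :: (Y ++ (X ++ [p])) := cyc_perm_of_split heq2
      have hlast : (q :: (Y ++ (X ++ [p]))).getLast (cons_ne_nil _ _) = p := by
        have e : q :: (Y ++ (X ++ [p])) = (q :: (Y ++ X)) ++ [p] := by simp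
        rw [getLast_congr _ (by simp) e]
        simp
      have hu2 : u ∉ q :: (Y ++ (X ++ [p])) := by
        intro hmem
        exact huW (hperm.mem_iff.mpr (hperm2.mem_iff.mpr hmem))
      have hins := hrot.insert_seam hu2 (by rw [hlast]; exact hpu) huq
      refine ⟨q, (Y ++ (X ++ [p])) ++ [u], hins, ?_, ?_⟩
      · have : v ∈ q :: (Y ++ (X ++ [p])) := hperm2.mem_iff.mp (hperm.mem_iff.mp hv)
        rcases mem_cons.mp this with rfl | h'
        · exact mem_cons_self
        · exact mem_cons_of_mem _ (mem_append_left _ h')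
      · have e1 := hperm.length_eq
        have e2 := hperm2.length_eq
        simp only [length_cons, length_append, length_nil] at e1 e2 ⊢
        omega
  · -- CASE 2: no mixed vertex
    push_neg at hmix
    set InS : Set V := {t | t ∉ a :: L ∧ ∀ y ∈ a :: L, ¬ A t y} with hInS
    set OutS : Set V := {t | t ∉ a :: L ∧ ∀ y ∈ a :: L, ¬ A y t} with hOutS
    have hsplit : ∀ t, t ∉ a :: L → t ∈ InS ∨ t ∈ OutS := by
      intro t ht
      by_cases hin : ∃ x ∈ a :: L, A x t
      · exact Or.inl ⟨ht, hmix t ht hin⟩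
      · push_neg at hin
        exact Or.inr ⟨ht, hin⟩
    have hLne : L ≠ [] := by
      rcases L with _ | _
      · simp at h3
      · simp
    -- every vertex of OutS dominates the whole cycle
    have hbeta : ∀ z ∈ OutS, ∀ y ∈ a :: L, A z y := by
      intro z hz y hyW
      have hzW : z ∉ a :: L := hz.1
      have hzy : z ≠ y := fun he => hzW (he ▸ hyW)
      by_cases hf : f z = f y
      · exfalso
        obtain ⟨s, hsW, hys⟩ := h.succ hyW hLne
        have hsy : s ≠ y := fun he => hA_ne hys (congrArg f he.symm)
        have hsz : s ≠ z := fun he => hzW (he ▸ hsW)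
        have hfzs : f z ≠ f s := fun hfzs => hMatch hzy hsz.symm hsy.symm hf hfzs
        have hzs : A z s := by
          rcases hTot hsz.symm hfzs with h' | h'
          · exact h'
          · exact absurd h' (hz.2 s hsW)
        exact hT hzy hf hzs hys
      · rcases hTot hzy hf with h' | h'
        · exact h'
        · exact absurd h' (hz.2 y hyW)
    -- InS is nonempty
    have hInNe : InS.Nonempty := by
      obtain ⟨p, hpW, t, htW, hpt⟩ := hStrongOut {t | t ∈ a :: L}
        ⟨a, mem_cons_self⟩
        (by
          intro he
          exact hu0 (by have : u0 ∈ {t | t ∈ a :: L} := he ▸ Set.mem_univ u0; exact this))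
      rcases hsplit t htW with hin | hout2
      · exact ⟨t, hin⟩
      · exact absurd hpt (hout2.2 p hpW)
    -- get w ∈ InS with an arc to some z ∈ OutS
    obtain ⟨w, hwIn, z, hzIn, hwz⟩ := hStrongOut InS hInNe
      (by
        intro he
        have : a ∈ InS := he ▸ Set.mem_univ a
        exact this.1 (mem_cons_self))
    have hzW : z ∉ a :: L := fun hzmem => (hwIn.2 z hzmem) hwz
    have hzOut : z ∈ OutS := by
      rcases hsplit z hzW with hin | hout2
      · exact absurd hin hzIn
      · exact hout2
    have hwW : w ∉ a :: L := hwIn.1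
    have hwzne : w ≠ z := fun he => hA_ne hwz (congrArg f he)
    have hlinkIn : ∀ p, p ∈ a :: L → f w ≠ f p → A p w := by
      intro p hp hf
      have hpw : p ≠ w := fun he => hwW (he ▸ hp)
      rcases hTot hpw hf.symm with h' | h'
      · exact h'
      · exact absurd h' (hwIn.2 p hp)
    obtain ⟨M, hMc, hperm⟩ := h.to_head hv
    have hlenW := hperm.length_eq
    rcases eq_nil_or_concat M with he | ⟨T, x, hMTx⟩
    · exfalso
      rw [he] at hlenW
      have h1 : (a :: L).length = 1 := by simpa using hlenW
      omega
    rw [concat_eq_append] at hMTx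
    subst hMTx
    have hmemW : ∀ t, t ∈ v :: (T ++ [x]) → t ∈ a :: L := fun t ht => hperm.mem_iff.mpr ht
    have hxW : x ∈ a :: L := hmemW x (by simp)
    have hwfresh : ∀ t ∈ a :: L, t ≠ w := fun t ht he => hwW (he ▸ ht)
    have hzfresh : ∀ t ∈ a :: L, t ≠ z := fun t ht he => hzW (he ▸ ht)
    have hp0mem : (v :: T).getLast (cons_ne_nil _ _) ∈ v :: T := getLast_mem _
    have hp0W : (v :: T).getLast (cons_ne_nil _ _) ∈ a :: L := by
      refine hmemW _ ?_
      rcases mem_cons.mp hp0mem with he | h'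
      · rw [he]; exact mem_cons_self
      · exact mem_cons_of_mem _ (mem_append_left _ h')
    by_cases hfp0 : f w = f ((v :: T).getLast (cons_ne_nil _ _))
    · -- the predecessor of the seam is the twin of w : drop the last vertex instead
      have hTne : T ≠ [] := by
        intro he
        exfalso
        subst he
        have h1 : (a :: L).length = 2 := by simpa using hlenW
        omega
      rcases eq_nil_or_concat T with he | ⟨T', p1, hTT'⟩
      · exact absurd he hTne
      rw [concat_eq_append] at hTT'
      subst hTT'
      have hp0p1 : (v :: (T' ++ [p1])).getLast (cons_ne_nil _ _) = p1 :=
        getLast_form (l' := v :: T') (x := p1) rfl _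
      rw [hp0p1] at hfp0 hp0W
      have heq3 : v :: ((T' ++ [p1]) ++ [x]) = (v :: T') ++ p1 :: [x] := by simp
      have hrot : IsCyc A p1 ([x] ++ (v :: T')) := hMc.rotate heq3
      have hperm3 := cyc_perm_of_split heq3
      have hrot2 : IsCyc A p1 (x :: v :: T') := by simpa using hrot
      have hchain0 : Chain' A (x :: v :: T') := (isChain_cons.mp hrot2.chain).2
      have hq1mem : (x :: v :: T').getLast (cons_ne_nil _ _) ∈ x :: v :: T' :=
        getLast_mem _
      have hq1W : (x :: v :: T').getLast (cons_ne_nil _ _) ∈ a :: L := by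
        refine hperm.mem_iff.mpr (hperm3.mem_iff.mpr ?_)
        exact mem_cons_of_mem p1 (by simpa using hq1mem)
      have hq1p1 : (x :: v :: T').getLast (cons_ne_nil _ _) ≠ p1 := by
        intro he
        have hnd := hrot2.nodup
        exact (nodup_cons.mp hnd).1 (he ▸ hq1mem)
      have hfq1 : f w ≠ f ((x :: v :: T').getLast (cons_ne_nil _ _)) := by
        intro hf
        exact hMatch (Ne.symm (hwfresh p1 hp0W)) (Ne.symm (hwfresh _ hq1W))
          (Ne.symm hq1p1) hfp0 hf
      have hq1w : A ((x :: v :: T').getLast (cons_ne_nil _ _)) w := hlinkIn _ hq1W hfq1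
      refine ⟨x, (v :: T') ++ [w, z], isCyc_of_parts ?_ ?_ ?_, ?_, ?_⟩
      · have e : x :: ((v :: T') ++ [w, z]) = (x :: v :: T') ++ [w, z] := by simp
        rw [e, nodup_append']
        refine ⟨(nodup_cons.mp hrot2.nodup).2, by simp [hwzne], ?_⟩
        intro t ht hc
        have htW : t ∈ a :: L :=
          hperm.mem_iff.mpr (hperm3.mem_iff.mpr (mem_cons_of_mem p1 (by simpa using ht)))
        simp [hwfresh t htW, hzfresh t htW] at hc
      · have e : x :: ((v :: T') ++ [w, z]) = (x :: v :: T') ++ w :: [z] := by simp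
        rw [e]
        exact chain'_glue (cons_ne_nil _ _) hchain0 (isChain_pair.mpr hwz) hq1w
      · rw [getLast_form (show x :: ((v :: T') ++ [w, z])
            = (x :: v :: T' ++ [w]) ++ [z] by simp)]
        exact hbeta z hzOut x hxW
      · simp
      · simp only [length_cons, length_append, length_nil] at hlenW ⊢
        omega
    · -- direct construction : drop the vertex before the head
      have hp0w : A ((v :: T).getLast (cons_ne_nil _ _)) w := hlinkIn _ hp0W hfp0
      refine ⟨v, T ++ [w, z], isCyc_of_parts ?_ ?_ ?_, mem_cons_self, ?_⟩
      · have e : v :: (T ++ [w, z]) = (v :: T) ++ [w, z] := by simp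
        rw [e, nodup_append']
        refine ⟨hMc.nodup.sublist ((sublist_append_left T [x]).cons₂ v), by simp [hwzne], ?_⟩
        intro t ht hc
        have htW : t ∈ a :: L := by
          refine hmemW t ?_
          rcases mem_cons.mp ht with he | h'
          · rw [he]; exact mem_cons_self
          · exact mem_cons_of_mem _ (mem_append_left _ h')
        simp [hwfresh t htW, hzfresh t htW] at hc
      · have e : v :: (T ++ [w, z]) = (v :: T) ++ w :: [z] := by simp
        rw [e]
        refine chain'_glue (cons_ne_nil _ _) ?_ (isChain_pair.mpr hwz) hp0w
        exact hMc.chain.prefix ⟨[x], by simp⟩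
      · rw [getLast_form (show v :: (T ++ [w, z]) = (v :: (T ++ [w])) ++ [z] by simp)]
        exact hbeta z hzOut v hv
      · simp only [length_cons, length_append, length_nil] at hlenW ⊢
        omega


/-- Abstract form: every vertex lies on cycles of all lengths `4..|V|`. -/
theorem abstract_pancyclic
    (hA_ne : ∀ {u v : V}, A u v → f u ≠ f v)
    (hAsym : ∀ {u v : V}, A u v → ¬ A v u)
    (hTot : ∀ {u v : V}, u ≠ v → f u ≠ f v → A u v ∨ A v u)
    (hMatch : ∀ {u v w : V}, u ≠ v → u ≠ w → v ≠ w → f u = f v → f u = f w → False)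
    (hT : ∀ {x y z : V}, x ≠ y → f x = f y → A x z → A y z → False)
    (hStrong : ∀ S : Set V, S.Nonempty → S ≠ Set.univ → ∃ u ∈ S, ∃ x, x ∉ S ∧ A x u)
    (hcard : 4 ≤ Fintype.card V)
    (v : V) (ℓ : ℕ) (h4 : 4 ≤ ℓ) (hle : ℓ ≤ Fintype.card V) :
    ∃ b M, IsCyc A b M ∧ v ∈ b :: M ∧ (b :: M).length = ℓ := by
  obtain ⟨L0, hc0, hlen0⟩ := exists_short_cycle (f := f) hA_ne hAsym hTot hMatch hStrong
    (by omega) v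
  have base4 : ∃ b M, IsCyc A b M ∧ v ∈ b :: M ∧ (b :: M).length = 4 := by
    rcases hlen0 with h3' | h4'
    · obtain ⟨b, M, g1, g2, g3⟩ := cyc_extend (f := f) hA_ne hAsym hTot hMatch hT hStrong
        hc0 (mem_cons_self) (by omega) (by omega)
      exact ⟨b, M, g1, g2, by omega⟩
    · exact ⟨v, L0, hc0, mem_cons_self, h4'⟩
  suffices key : ∀ m, 4 ≤ m → m ≤ Fintype.card V →
      ∃ b M, IsCyc A b M ∧ v ∈ b :: M ∧ (b :: M).length = m from key ℓ h4 hle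
  intro m hm
  induction m, hm using Nat.le_induction with
  | base => intro _; exact base4
  | succ m hm ih =>
    intro hsc
    obtain ⟨b, M, g1, g2, g3⟩ := ih (by omega)
    obtain ⟨b', M', k1, k2, k3⟩ := cyc_extend (f := f) hA_ne hAsym hTot hMatch hT hStrong
      g1 g2 (by omega) (by omega)
    exact ⟨b', M', k1, k2, by omega⟩

end Abstract
end DVP

/-- In a degenerate edge-colored $K_n$ ($n ≥ 4$) with no monochromatic
triangle, in which no proper subset is a degenerate set, every vertex lies on
properly colored cycles of all lengths from 4 to $n$. -/
theorem degenerate_vertex_pancyclic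
    (n : ℕ) (hn : 4 ≤ n) (col : Fin n → Fin n → ℕ)
    (hsym : ∀ u v, col u v = col v u)
    (hmono : ¬ HasMonoTriangle col)
    (f : Fin n → ℕ)
    (hcompat : ∀ u v : Fin n, u ≠ v → col u v = f u ∨ col u v = f v)
    (hnodeg : ∀ S : Set (Fin n), DegenSet col S → S = Set.univ) :
    ∀ v : Fin n, ∀ ℓ : ℕ, 4 ≤ ℓ → ℓ ≤ n → PCThrough col ℓ v := by
  intro v ℓ h4 hln
  classical
  set A : Fin n → Fin n → Prop := fun u v => col u v = f u ∧ f u ≠ f v with hA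
  have hA_ne : ∀ {u w : Fin n}, A u w → f u ≠ f w := fun h => h.2
  have hAsym : ∀ {u w : Fin n}, A u w → ¬ A w u := by
    rintro u w ⟨h1, h2⟩ ⟨h3, h4'⟩
    rw [hsym u w] at h1
    exact h2 (h1.symm.trans h3)
  have hTot : ∀ {u w : Fin n}, u ≠ w → f u ≠ f w → A u w ∨ A w u := by
    intro u w hne hf
    rcases hcompat u w hne with h | h
    · exact Or.inl ⟨h, hf⟩
    · exact Or.inr ⟨by rw [← hsym u w]; exact h, hf.symm⟩
  have hMatch : ∀ {u w x : Fin n}, u ≠ w → u ≠ x → w ≠ x →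
      f u = f w → f u = f x → False := by
    intro u w x h1 h2 h3 e1 e2
    apply hmono
    have c1 : col u w = f u := by
      rcases hcompat u w h1 with h | h
      · exact h
      · rw [h, ← e1]
    have c2 : col w x = f u := by
      rcases hcompat w x h3 with h | h
      · rw [h, ← e1]
      · rw [h, ← e2]
    have c3 : col u x = f u := by
      rcases hcompat u x h2 with h | h
      · exact h
      · rw [h, ← e2]
    exact ⟨u, w, x, h1, h3, h2, by rw [c1, c2], by rw [c1, c3]⟩
  have hT : ∀ {x y z : Fin n}, x ≠ y → f x = f y → A x z → A y z → False := by
    intro x y z hxy e hxz hyz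
    apply hmono
    have hyzne : y ≠ z := fun he => hyz.2 (congrArg f he)
    have hxzne : x ≠ z := fun he => hxz.2 (congrArg f he)
    have c1 : col x y = f x := by
      rcases hcompat x y hxy with h | h
      · exact h
      · rw [h, ← e]
    exact ⟨x, y, z, hxy, hyzne, hxzne,
      by rw [c1, hyz.1, ← e], by rw [c1, hxz.1]⟩
  have hStrong : ∀ S : Set (Fin n), S.Nonempty → S ≠ Set.univ →
      ∃ u ∈ S, ∃ x, x ∉ S ∧ A x u := by
    intro S hne hnu
    by_contra hcon
    push_neg at hcon
    apply hnu
    apply hnodeg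
    refine ⟨hne, f, fun u _ w _ hne' => hcompat u w hne', ?_⟩
    intro u huS x hxS
    rcases hcompat u x (fun he => hxS (he ▸ huS)) with h | h
    · exact h
    · by_cases hf : f x = f u
      · rw [h, hf]
      · exact absurd ⟨by rw [← hsym u x]; exact h, hf⟩ (hcon u huS x hxS)
  have hcardV : Fintype.card (Fin n) = n := Fintype.card_fin n
  obtain ⟨b, M, hcyc, hvmem, hlen⟩ :=
    DVP.abstract_pancyclic (A := A) (f := f) hA_ne hAsym hTot hMatch hT hStrong
      (by omega) v ℓ h4 (by omega)
  -- conversion to a `ZMod ℓ` indexed properly colored cycle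
  haveI : NeZero ℓ := ⟨by omega⟩
  haveI : Fact (1 < ℓ) := ⟨by omega⟩
  have hWlen : (b :: M).length = ℓ := hlen
  have hlt : ∀ i : ZMod ℓ, i.val < (b :: M).length := by
    intro i; rw [hWlen]; exact ZMod.val_lt i
  set c : ZMod ℓ → Fin n := fun i => (b :: M).get ⟨i.val, hlt i⟩ with hc
  have hval : ∀ i : ZMod ℓ, (i + 1).val = (i.val + 1) % ℓ := by
    intro i
    rw [ZMod.val_add, ZMod.val_one]
  have hstep : ∀ (j : ℕ) (hj : j < ℓ),
      A ((b :: M).get ⟨j, by omega⟩) ((b :: M).get ⟨(j + 1) % ℓ, by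
        rw [hWlen]; exact Nat.mod_lt _ (by omega)⟩) := by
    intro j hj
    by_cases hj1 : j + 1 < ℓ
    · have hmod : (j + 1) % ℓ = j + 1 := Nat.mod_eq_of_lt hj1
      have e : (⟨(j + 1) % ℓ, by rw [hWlen]; exact Nat.mod_lt _ (by omega)⟩ :
          Fin (b :: M).length) = ⟨j + 1, by omega⟩ := Fin.ext hmod
      rw [e]
      exact List.isChain_iff_getElem.mp hcyc.chain j (by omega)
    · have hje : j + 1 = ℓ := by omega
      have hmod : (j + 1) % ℓ = 0 := by rw [hje, Nat.mod_self]
      have e : (⟨(j + 1) % ℓ, by rw [hWlen]; exact Nat.mod_lt _ (by omega)⟩ :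
          Fin (b :: M).length) = ⟨0, by simp⟩ := Fin.ext hmod
      rw [e]
      have e2 : (⟨j, by omega⟩ : Fin (b :: M).length) =
          ⟨(b :: M).length - 1, by simp⟩ := Fin.ext (by simp only [hWlen]; omega)
      rw [e2]
      have e3 := List.getLast_eq_getElem (l := b :: M) (List.cons_ne_nil b M)
      have := hcyc.closure
      rw [e3] at this
      exact this
  have harc : ∀ i : ZMod ℓ, A (c i) (c (i + 1)) := by
    intro i
    have e : c (i + 1) = (b :: M).get ⟨(i.val + 1) % ℓ, by
        rw [hWlen]; exact Nat.mod_lt _ (by omega)⟩ := by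
      simp only [hc]
      congr 1
      exact Fin.ext (hval i)
    rw [e]
    exact hstep i.val (ZMod.val_lt i)
  refine ⟨c, ⟨?_, ?_⟩, ?_⟩
  · intro i j hij
    have := (hcyc.nodup.get_inj_iff).mp hij
    have hvv : i.val = j.val := congrArg Fin.val this
    exact ZMod.val_injective ℓ hvv
  · intro i
    have h1 := harc i
    have h2 := harc (i + 1)
    have e12 : i + 1 + 1 = i + 2 := by ring
    rw [e12] at h2
    rw [h1.1, h2.1]
    exact h1.2
  · obtain ⟨⟨m, hm⟩, he⟩ := List.mem_iff_get.mp hvmem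
    refine ⟨(m : ZMod ℓ), ?_⟩
    have e : (⟨((m : ℕ) : ZMod ℓ).val, hlt _⟩ : Fin (b :: M).length) = ⟨m, hm⟩ := by
      refine Fin.ext ?_
      show ((m : ℕ) : ZMod ℓ).val = m
      rw [ZMod.val_natCast]
      exact Nat.mod_eq_of_lt (by omega)
    show (b :: M).get _ = v
    rw [e]
    exact he
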